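/- Let $\Delta$ be an irreducible crystallographic root system with highest root $\theta = \sum_i m_i \alpha_i$, and suppose $m_j = 1$ for a simple root $\alpha_j$. Let $w_0^j$ be the longest element of the parabolic subgroup of the Weyl group generated by the simple reflections $s_i$ with $i \neq j$. Then $w_0^j(\alpha_j) = \theta$ and $w_0^j(\theta) = \alpha_j$. -/

import Mathlib

open scoped RealInnerProductSpace

/-- Let `Δp` be the positive roots of an irreducible crystallographic root system with
simple roots `α i`, highest root `θ = ∑ m i • α i` (so `θ` is the unique root of maximal
height `h - 1`, heights being computed by pairing with `ρ̌`), and suppose `m j = 1`.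
If `w = w₀ʲ` is the longest element of the parabolic subgroup generated by the simple
reflections `s i`, `i ≠ j` — so that `w` maps `{α i | i ≠ j}` onto `{-α i | i ≠ j}` and
maps `α j` and `θ` to positive roots — then `w (α j) = θ` and `w θ = α j`. -/
theorem parabolic_longest_element_highest_root {V : Type*} [NormedAddCommGroup V]
    [InnerProductSpace ℝ V] {n : ℕ}
    (α : Fin n → V) (θ ρ : V) (m : Fin n → ℕ) (h : ℕ) (j : Fin n)
    (Δp : Finset V) (w : V ≃ₗᵢ[ℝ] V) (σ : Equiv.Perm {i : Fin n // i ≠ j})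
    (h0 : (0 : V) ∉ Δp)
    (hα : ∀ i, α i ∈ Δp)
    (hposc : ∀ β ∈ Δp, ∃ c : Fin n → ℕ, β = ∑ i, (c i : ℝ) • α i)
    (hind : LinearIndependent ℝ α)
    (hρ : ∀ i, ⟪ρ, α i⟫ = 1)
    (hθ : θ = ∑ i, (m i : ℝ) • α i) (hθΔ : θ ∈ Δp)
    (hmj : m j = 1) (hm : ∀ i, 0 < m i)
    (hh : h = 1 + ∑ i, m i)
    (hmax : ∀ β ∈ Δp, ⟪ρ, β⟫ ≤ (h : ℝ) - 1)
    (huniq : ∀ β ∈ Δp, ⟪ρ, β⟫ = (h : ℝ) - 1 → β = θ)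
    (hwj : ∀ i : {i : Fin n // i ≠ j}, w (α i) = - α (σ i))
    (hwa : w (α j) ∈ Δp) (hwt : w θ ∈ Δp) :
    w (α j) = θ ∧ w θ = α j := by
  classical
  -- pairing with ρ computes the height
  have pair : ∀ c : Fin n → ℕ, ⟪ρ, ∑ i, (c i : ℝ) • α i⟫ = ∑ i, (c i : ℝ) := by
    intro c
    rw [inner_sum]
    simp [real_inner_smul_right, hρ]
  have hpos : ∀ β ∈ Δp, (1 : ℝ) ≤ ⟪ρ, β⟫ := by
    intro β hβ
    obtain ⟨c, hc⟩ := hposc β hβ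
    rw [hc, pair]
    have hne : ∑ i, c i ≠ 0 := by
      intro hzero
      apply h0
      have hall : ∀ i ∈ Finset.univ, c i = 0 := (Finset.sum_eq_zero_iff).mp hzero
      have : β = 0 := by
        rw [hc]
        apply Finset.sum_eq_zero
        intro i hi
        rw [hall i hi]; simp
      rwa [this] at hβ
    have h1 : 1 ≤ ∑ i, c i := Nat.one_le_iff_ne_zero.mpr hne
    exact_mod_cast h1
  -- split θ
  have hsub : ∑ i ∈ Finset.univ.erase j, (m i : ℝ) • α i
      = ∑ i : {i : Fin n // i ≠ j}, (m (i : Fin n) : ℝ) • α i :=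
    Finset.sum_subtype _ (fun x => by simp) _
  have hθsplit : θ = α j + ∑ i : {i : Fin n // i ≠ j}, (m (i : Fin n) : ℝ) • α i := by
    rw [hθ, ← Finset.add_sum_erase _ _ (Finset.mem_univ j), hsub, hmj]
    simp
  have hwθ : w θ = w (α j) - ∑ i : {i : Fin n // i ≠ j}, (m (i : Fin n) : ℝ) • α (σ i) := by
    rw [hθsplit, map_add, map_sum, sub_eq_add_neg, ← Finset.sum_neg_distrib]
    congr 1
    apply Finset.sum_congr rfl
    intro i _
    rw [map_smul, hwj i, smul_neg]
  -- heights
  set T : ℝ := ∑ i : {i : Fin n // i ≠ j}, (m (i : Fin n) : ℝ) with hT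
  have hTsum : (h : ℝ) = 2 + T := by
    have h1 : (h : ℝ) = 1 + ∑ i, (m i : ℝ) := by exact_mod_cast hh
    have h2 : ∑ i, (m i : ℝ) = (m j : ℝ) + ∑ i ∈ Finset.univ.erase j, (m i : ℝ) :=
      (Finset.add_sum_erase _ _ (Finset.mem_univ j)).symm
    have h3 : ∑ i ∈ Finset.univ.erase j, (m i : ℝ) = T :=
      Finset.sum_subtype _ (fun x => by simp) _
    rw [h1, h2, h3, hmj]
    push_cast
    ring
  have key1 : ⟪ρ, w θ⟫ = ⟪ρ, w (α j)⟫ - T := by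
    rw [hwθ, inner_sub_right]
    congr 1
    rw [inner_sum]
    simp [real_inner_smul_right, hρ]
    exact hT.symm
  have h1 : (1 : ℝ) ≤ ⟪ρ, w θ⟫ := hpos _ hwt
  have h2 : ⟪ρ, w (α j)⟫ ≤ (h : ℝ) - 1 := hmax _ hwa
  have hwαj : w (α j) = θ := huniq _ hwa (by linarith)
  have hwθ1 : ⟪ρ, w θ⟫ = 1 := by linarith
  -- second part
  obtain ⟨c, hc⟩ := hposc _ hwt
  have hsum1 : ∑ i, (c i : ℝ) = 1 := by
    rw [hc, pair] at hwθ1; exact hwθ1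
  have hsumN : ∑ i, c i = 1 := by exact_mod_cast hsum1
  have hex : ∃ k, c k ≠ 0 := by
    by_contra hcon
    push_neg at hcon
    simp [hcon] at hsumN
  obtain ⟨k, hk⟩ := hex
  have hk1 : c k = 1 := by
    have hle : c k ≤ 1 := hsumN ▸ Finset.single_le_sum (fun i _ => Nat.zero_le _)
      (Finset.mem_univ k)
    omega
  have hzero : ∀ i, i ≠ k → c i = 0 := by
    intro i hik
    by_contra hne
    have hsubset : ({i, k} : Finset (Fin n)) ⊆ Finset.univ := Finset.subset_univ _
    have h2le : c i + c k ≤ ∑ i, c i := by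
      rw [← Finset.sum_pair hik]
      exact Finset.sum_le_sum_of_subset hsubset
    omega
  have hwθk : w θ = α k := by
    rw [hc, Finset.sum_eq_single k]
    · rw [hk1]; simp
    · intro b _ hb
      rw [hzero b hb]; simp
    · intro hcon
      exact absurd (Finset.mem_univ k) hcon
  have hkj : k = j := by
    by_contra hkj
    have hW2 : w (α ((σ.symm ⟨k, hkj⟩ : {i : Fin n // i ≠ j}) : Fin n)) = - α k := by
      rw [hwj (σ.symm ⟨k, hkj⟩), Equiv.apply_symm_apply]
    have hWθ : w θ = w (- α ((σ.symm ⟨k, hkj⟩ : {i : Fin n // i ≠ j}) : Fin n)) := by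
      rw [map_neg, hW2, neg_neg, hwθk]
    have hθeq : θ = - α ((σ.symm ⟨k, hkj⟩ : {i : Fin n // i ≠ j}) : Fin n) :=
      w.injective hWθ
    have hρθ : (1 : ℝ) ≤ ⟪ρ, θ⟫ := hpos _ hθΔ
    rw [hθeq, inner_neg_right, hρ] at hρθ
    linarith
  exact ⟨hwαj, by rw [hwθk, hkj]⟩
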